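/- Let A be a k × k integer matrix with non-zero determinant, with adjugate matrix A* = (a*_{ij}), and let H be the additive subgroup of ℤ^k spanned over ℤ by the columns of A. Then H is an ideal of the product ring ℤ^k if and only if there exist non-zero integers d_1, …, d_k such that det(A) = ±(d_1 d_2 ⋯ d_k) and, for each i, the integer det(A)/d_i divides every entry a*_{1i}, …, a*_{ki} of the i-th column of A* (equivalently, det(A)/d_i divides gcd(a*_{1i}, …, a*_{ki})). -/

import Mathlib

open Matrix

lemma mem_span_cols_iff {k : ℕ} (A : Matrix (Fin k) (Fin k) ℤ) (x : Fin k → ℤ) :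
    x ∈ Submodule.span ℤ (Set.range Aᵀ) ↔ ∃ c, A.mulVec c = x := by
  rw [show Set.range Aᵀ = Set.range A.col from rfl, ← Matrix.range_mulVecLin]
  exact LinearMap.mem_range

lemma single_mul_eq {k : ℕ} (i : Fin k) (x : Fin k → ℤ) :
    (Pi.single i 1 : Fin k → ℤ) * x = Pi.single i (x i) := by
  funext j
  by_cases h : j = i
  · subst h; simp
  · simp [Pi.single_apply, h]

/-- The lattice spanned by the columns of a `k × k` integer matrix `A` with nonzero
determinant is an ideal of `ℤ^k` iff there are nonzero integers `d₁, …, d_k` with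
`det A = ±(d₁⋯d_k)` and `det A / dᵢ` dividing every entry of the `i`-th column of
the adjugate of `A`. -/
theorem span_columns_ideal_iff_adjugate (k : ℕ) (A : Matrix (Fin k) (Fin k) ℤ)
    (hA : A.det ≠ 0) :
    (∃ I : Ideal (Fin k → ℤ),
      (I : Set (Fin k → ℤ)) = (Submodule.span ℤ (Set.range Aᵀ) : Set (Fin k → ℤ))) ↔
    ∃ d : Fin k → ℤ, (∀ i, d i ≠ 0) ∧
      (A.det = ∏ i, d i ∨ A.det = -∏ i, d i) ∧
      ∀ i j : Fin k, (A.det / d i) ∣ A.adjugate j i := by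
  constructor
  · rintro ⟨I, hI⟩
    set H := Submodule.span ℤ (Set.range Aᵀ) with hH
    have hmemH : ∀ x, x ∈ H ↔ ∃ c, A.mulVec c = x := fun x => mem_span_cols_iff A x
    have hIH : ∀ x, x ∈ I ↔ x ∈ H := fun x => by
      rw [← SetLike.mem_coe, ← SetLike.mem_coe, hI]
    have hsm : ∀ (r x : Fin k → ℤ), x ∈ H → r * x ∈ H := by
      intro r x hx
      exact (hIH _).mp (I.smul_mem r ((hIH x).mpr hx))
    -- per-coordinate ideals
    set S : Fin k → Ideal ℤ := fun i =>
      Submodule.comap (LinearMap.toSpanSingleton ℤ (Fin k → ℤ) (Pi.single i 1)) H with hS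
    have hmemS : ∀ (i : Fin k) (n : ℤ), n ∈ S i ↔ Pi.single i n ∈ H := by
      intro i n
      simp only [hS, Submodule.mem_comap, LinearMap.toSpanSingleton_apply]
      constructor <;> intro h
      · convert h using 1
        funext j; by_cases hji : j = i <;> simp [Pi.single_apply, hji]
      · convert h using 1
        funext j; by_cases hji : j = i <;> simp [Pi.single_apply, hji]
    set d : Fin k → ℤ := fun i => Submodule.IsPrincipal.generator (S i) with hd
    have hdmem : ∀ i, Pi.single i (d i) ∈ H := fun i =>
      (hmemS i (d i)).mp (Submodule.IsPrincipal.generator_mem (S i))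
    have hcoord : ∀ (x : Fin k → ℤ), x ∈ H → ∀ i, d i ∣ x i := by
      intro x hx i
      rw [← Submodule.IsPrincipal.mem_iff_generator_dvd, hmemS]
      rw [← single_mul_eq]
      exact hsm _ _ hx
    -- det belongs to span columns coordinatewise
    have hdetH : ∀ i, Pi.single i A.det ∈ H := by
      intro i
      rw [hmemH]
      refine ⟨A.adjugate *ᵥ Pi.single i 1, ?_⟩
      rw [Matrix.mulVec_mulVec, Matrix.mul_adjugate, Matrix.smul_mulVec,
        Matrix.one_mulVec]
      funext j; by_cases hji : j = i <;> simp [Pi.single_apply, hji]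
    have hddet : ∀ i, d i ∣ A.det := by
      intro i
      have := hcoord _ (hdetH i) i
      simpa using this
    have hd0 : ∀ i, d i ≠ 0 := by
      intro i h
      exact hA (zero_dvd_iff.mp (h ▸ hddet i))
    -- choose preimages of d i • e i
    have hc : ∀ i, ∃ c, A.mulVec c = Pi.single i (d i) := fun i => (hmemH _).mp (hdmem i)
    choose c hc using hc
    -- divisibility of adjugate entries
    have hdiv : ∀ i j : Fin k, (A.det / d i) ∣ A.adjugate j i := by
      intro i j
      have h1 : A.adjugate *ᵥ (A *ᵥ c i) = A.det • c i := by
        rw [Matrix.mulVec_mulVec, Matrix.adjugate_mul, Matrix.smul_mulVec,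
          Matrix.one_mulVec]
      rw [hc i] at h1
      have h2 : A.adjugate j i * d i = A.det * c i j := by
        have := congrFun h1 j
        simpa using this
      have h3 : A.det ∣ A.adjugate j i * d i := ⟨c i j, h2⟩
      have h4 : (A.det / d i) * d i = A.det := Int.ediv_mul_cancel (hddet i)
      rw [← h4] at h3
      exact (mul_dvd_mul_iff_right (hd0 i)).mp h3
    -- determinant equals ± product
    refine ⟨d, hd0, ?_, hdiv⟩
    set C : Matrix (Fin k) (Fin k) ℤ := Matrix.of (fun l i => c i l) with hC
    have hAC : A * C = Matrix.diagonal d := by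
      ext j i
      have h1 : (A * C) j i = (A.mulVec (c i)) j := by
        simp [Matrix.mul_apply, Matrix.mulVec, dotProduct, hC]
      rw [h1, hc i]
      by_cases hji : j = i
      · subst hji; simp
      · simp [Pi.single_apply, hji, Matrix.diagonal_apply_ne _ hji]
    have hdA : ∀ i j, d i ∣ A i j := by
      intro i j
      refine hcoord (fun l => A l j) ?_ i
      rw [hmemH]
      exact ⟨Pi.single j 1, by simp; rfl⟩
    set B : Matrix (Fin k) (Fin k) ℤ := Matrix.of (fun i j => A i j / d i) with hB
    have hDB : Matrix.diagonal d * B = A := by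
      ext i j
      rw [Matrix.diagonal_mul]
      exact Int.mul_ediv_cancel' (hdA i j)
    have h5 : A.det * C.det = ∏ i, d i := by
      rw [← Matrix.det_mul, hAC, Matrix.det_diagonal]
    have h6 : (∏ i, d i) * B.det = A.det := by
      rw [← Matrix.det_diagonal, ← Matrix.det_mul, hDB]
    have h7 : A.det * (C.det * B.det) = A.det * 1 := by
      rw [mul_one, ← mul_assoc, h5, h6]
    have h8 : C.det * B.det = 1 := mul_left_cancel₀ hA h7
    have h9 : IsUnit C.det := IsUnit.of_mul_eq_one _ h8
    rcases Int.isUnit_iff.mp h9 with h | h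
    · left; rw [← h5, h, mul_one]
    · right; rw [← h5, h]; ring
  · rintro ⟨d, hd0, hdet, hdiv⟩
    have hdd : ∀ i, d i ∣ A.det := by
      intro i
      have h := Finset.dvd_prod_of_mem d (Finset.mem_univ i)
      rcases hdet with h' | h' <;> rw [h']
      · exact h
      · exact h.neg_right
    set e : Fin k → ℤ := fun i => A.det / d i with he
    have hed : ∀ i, e i * d i = A.det := fun i => Int.ediv_mul_cancel (hdd i)
    have he0 : ∀ i, e i ≠ 0 := fun i h => hA (by rw [← hed i, h, zero_mul])
    set B : Matrix (Fin k) (Fin k) ℤ := Matrix.of (fun j i => A.adjugate j i / e i) with hB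
    have hBe : ∀ j i, B j i * e i = A.adjugate j i := fun j i =>
      Int.ediv_mul_cancel (hdiv i j)
    have hAB : A * B = Matrix.diagonal d := by
      ext j i
      have h1 : (A * B) j i * e i = (A * A.adjugate) j i := by
        rw [Matrix.mul_apply, Matrix.mul_apply, Finset.sum_mul]
        congr 1; funext l; rw [mul_assoc, hBe l i]
      rw [Matrix.mul_adjugate] at h1
      have h2 : Matrix.diagonal d j i * e i = (A.det • (1 : Matrix (Fin k) (Fin k) ℤ)) j i := by
        by_cases h : j = i
        · subst h; simp [mul_comm (d j), hed]
        · simp [Matrix.diagonal_apply_ne _ h, Matrix.one_apply_ne h]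
      exact mul_right_cancel₀ (he0 i) (h1.trans h2.symm)
    have hprod0 : (∏ i, d i) ≠ 0 := Finset.prod_ne_zero_iff.mpr (fun i _ => hd0 i)
    have h5 : A.det * B.det = ∏ i, d i := by
      rw [← Matrix.det_mul, hAB, Matrix.det_diagonal]
    have hu : IsUnit B.det := by
      rcases hdet with h | h
      · rw [h] at h5
        have : B.det = 1 := mul_left_cancel₀ hprod0 (h5.trans (mul_one _).symm)
        rw [this]; exact isUnit_one
      · rw [h] at h5
        have : B.det = -1 := by
          have h6 : (∏ i, d i) * B.det = (∏ i, d i) * (-1) := by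
            rw [mul_neg_one]
            linarith [h5]
          exact mul_left_cancel₀ hprod0 h6
        rw [this]; exact (Int.isUnit_iff.mpr (Or.inr rfl))
    haveI := B.invertibleOfIsUnitDet hu
    have hAD : A = Matrix.diagonal d * ⅟B := by
      calc A = A * (B * ⅟B) := by rw [mul_invOf_self, mul_one]
      _ = (A * B) * ⅟B := by rw [mul_assoc]
      _ = Matrix.diagonal d * ⅟B := by rw [hAB]
    have hdA : ∀ i j, d i ∣ A i j := by
      intro i j
      rw [hAD, Matrix.diagonal_mul]
      exact Dvd.intro _ rfl
    refine ⟨{ carrier := {x | ∀ i, d i ∣ x i},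
              add_mem' := fun hx hy i => dvd_add (hx i) (hy i),
              zero_mem' := fun i => dvd_zero _,
              smul_mem' := fun r x hx i => (hx i).mul_left (r i) }, ?_⟩
    ext x
    simp only [SetLike.mem_coe, mem_span_cols_iff]
    constructor
    · intro hx
      have hx' : ∀ i, d i ∣ x i := hx
      set y : Fin k → ℤ := fun i => x i / d i with hy
      refine ⟨B *ᵥ y, ?_⟩
      rw [Matrix.mulVec_mulVec, hAB]
      funext i
      rw [Matrix.mulVec_diagonal]
      exact Int.mul_ediv_cancel' (hx' i)
    · rintro ⟨c, rfl⟩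
      intro i
      show d i ∣ ∑ j, A i j * c j
      exact Finset.dvd_sum (fun j _ => ((hdA i j).mul_right _))
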